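/- arXiv:1812.10096 — 2 statements merged into one kernel-verified Lean document; each statement's English description precedes it below -/
import Mathlib

section
/- Canonical form of the structured matrix pair: let n₁, n₂, n₃, n₄ be nonnegative integers, and let E, K be the real square matrices of size n₁+n₂+n₃+n₄ with block structure E = diag(0, 0, M, 0) and K = [[A₁₁, 0, 0, B₄₁ᵀ], [0, 0, B₃₂ᵀ, B₄₂ᵀ], [0, B₃₂, 0, 0], [B₄₁, B₄₂, 0, 0]], where M ∈ ℝ^{n₃×n₃} is symmetric positive definite, A₁₁ ∈ ℝ^{n₁×n₁} is symmetric positive semidefinite, B₃₂ ∈ ℝ^{n₃×n₂}, B₄₁ ∈ ℝ^{n₄×n₁}, B₄₂ ∈ ℝ^{n₄×n₂}. Assume K is invertible and that the matrix A = diag(A₁₁, 0) ∈ ℝ^{(n₁+n₂)×(n₁+n₂)} is positive definite on the kernel of B = [[0, B₃₂], [B₄₁, B₄₂]] ∈ ℝ^{(n₃+n₄)×(n₁+n₂)} (i.e., xᵀAx > 0 for every nonzero x with Bx = 0). Then there exists an invertible matrix V such that, with respect to a block partition into five blocks of sizes n₄, n₃, n₁+n₂−n₃−n₄, n₃, n₄: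 (i) VᵀEV = diag(0, 0, 0, M, 0); (ii) VᵀKV = [[0, 0, 0, 0, B̂₅₁ᵀ], [0, Â₂₂, 0, B̂₄₂ᵀ, 0], [0, 0, Â₃₃, 0, 0], [0, B̂₄₂, 0, 0, 0], [B̂₅₁, 0, 0, 0, 0]] with Â₃₃ symmetric and B̂₄₂ ∈ ℝ^{n₃×n₃}, B̂₅₁ ∈ ℝ^{n₄×n₄} invertible; (iii) for every F₃ ∈ ℝ^{n₃}, Vᵀ applied to the block vector (0, 0, F₃, 0) equals the block vector (0, 0, 0, F₃, 0). -/
open Matrix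

noncomputable section

namespace DAECanon

set_option linter.unusedSectionVars false

variable {R : Type*} [CommRing R] {m m₁ m₂ n n₁ n₂ : Type*}

lemma fromRows_add' (A₁ C₁ : Matrix m₁ n R) (A₂ C₂ : Matrix m₂ n R) :
    fromRows A₁ A₂ + fromRows C₁ C₂ = fromRows (A₁ + C₁) (A₂ + C₂) := by
  ext (i | i) j <;> simp

lemma fromCols_add' (A₁ C₁ : Matrix m n₁ R) (A₂ C₂ : Matrix m n₂ R) :
    fromCols A₁ A₂ + fromCols C₁ C₂ = fromCols (A₁ + C₁) (A₂ + C₂) := by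
  ext i (j | j) <;> simp

lemma fromBlocks_expand (A : Matrix m₁ n₁ R) (B : Matrix m₁ n₂ R) (C : Matrix m₂ n₁ R)
    (D : Matrix m₂ n₂ R) :
    fromBlocks A B C D = fromRows (fromCols A B) (fromCols C D) :=
  (fromRows_fromCols_eq_fromBlocks ..).symm

lemma one_sum_expand [DecidableEq m₁] [DecidableEq m₂] :
    (1 : Matrix (m₁ ⊕ m₂) (m₁ ⊕ m₂) R) = fromRows (fromCols 1 0) (fromCols 0 1) := by
  rw [fromRows_fromCols_eq_fromBlocks, fromBlocks_one]

lemma fc_fromRows (B₁₁ : Matrix m₁ n₁ R) (B₂₁ : Matrix m₂ n₁ R) (B₁₂ : Matrix m₁ n₂ R)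
    (B₂₂ : Matrix m₂ n₂ R) :
    fromCols (fromRows B₁₁ B₂₁) (fromRows B₁₂ B₂₂) =
      fromRows (fromCols B₁₁ B₁₂) (fromCols B₂₁ B₂₂) := by
  rw [fromCols_fromRows_eq_fromBlocks, fromBlocks_expand]

lemma fc_zero_fromRows (B₁₂ : Matrix m₁ n₂ R) (B₂₂ : Matrix m₂ n₂ R) :
    fromCols (0 : Matrix (m₁ ⊕ m₂) n₁ R) (fromRows B₁₂ B₂₂) =
      fromRows (fromCols 0 B₁₂) (fromCols 0 B₂₂) := by
  rw [← fromRows_zero, fc_fromRows]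

lemma fc_fromRows_zero (B₁₁ : Matrix m₁ n₁ R) (B₂₁ : Matrix m₂ n₁ R) :
    fromCols (fromRows B₁₁ B₂₁) (0 : Matrix (m₁ ⊕ m₂) n₂ R) =
      fromRows (fromCols B₁₁ 0) (fromCols B₂₁ 0) := by
  rw [← fromRows_zero, fc_fromRows]

section Aux

variable {m p3 p4 r : Type*} [Fintype m] [Fintype p3] [Fintype p4] [Fintype r]
  [DecidableEq m] [DecidableEq p3] [DecidableEq p4] [DecidableEq r]

/-- The transformation matrix. -/
def auxV (W3 : Matrix m p3 ℝ) (W4 : Matrix m p4 ℝ) (Z : Matrix m r ℝ)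
    (P : Matrix p4 p4 ℝ) (Q : Matrix p4 p3 ℝ) :
    Matrix (m ⊕ (p3 ⊕ p4)) (p4 ⊕ (p3 ⊕ (r ⊕ (p3 ⊕ p4)))) ℝ :=
  fromBlocks W4 (fromCols W3 (fromCols Z 0))
    (fromRows 0 P) (fromCols (fromRows 0 Q) (fromCols 0 1))

/-- Its inverse. -/
def auxV' (B3 : Matrix p3 m ℝ) (B4 : Matrix p4 m ℝ) (L : Matrix r m ℝ)
    (P : Matrix p4 p4 ℝ) (Q : Matrix p4 p3 ℝ) :
    Matrix (p4 ⊕ (p3 ⊕ (r ⊕ (p3 ⊕ p4)))) (m ⊕ (p3 ⊕ p4)) ℝ :=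
  fromBlocks B4 0
    (fromRows B3 (fromRows L (fromRows 0 (-(P * B4) + -(Q * B3)))))
    (fromRows 0 (fromRows 0 (fromRows (fromCols 1 0) (fromCols 0 1))))

theorem aux (A : Matrix m m ℝ) (B3 : Matrix p3 m ℝ) (B4 : Matrix p4 m ℝ)
    (W3 : Matrix m p3 ℝ) (W4 : Matrix m p4 ℝ) (Z : Matrix m r ℝ) (L : Matrix r m ℝ)
    (P : Matrix p4 p4 ℝ) (Q : Matrix p4 p3 ℝ) (M : Matrix p3 p3 ℝ)
    (hA : Aᵀ = A)
    (h33 : B3 * W3 = 1) (h34 : B3 * W4 = 0) (h43 : B4 * W3 = 0) (h44 : B4 * W4 = 1)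
    (h3Z : B3 * Z = 0) (h4Z : B4 * Z = 0)
    (hZ3 : Zᵀ * (A * W3) = 0) (hZ4 : Zᵀ * (A * W4) = 0)
    (hL3 : L * W3 = 0) (hL4 : L * W4 = 0) (hLZ : L * Z = 1)
    (hPt : Pᵀ = P) (hP : W4ᵀ * (A * W4) = -P + -P)
    (hQ : W4ᵀ * (A * W3) = -Q) :
    auxV' B3 B4 L P Q * auxV W3 W4 Z P Q = 1 ∧
    (auxV W3 W4 Z P Q)ᵀ *
        (fromBlocks A (fromCols B3ᵀ B4ᵀ) (fromRows B3 B4) 0) * auxV W3 W4 Z P Q =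
      fromBlocks 0 (fromCols 0 (fromCols 0 (fromCols 0 (1 : Matrix p4 p4 ℝ))))
        (fromRows 0 (fromRows 0 (fromRows 0 (1 : Matrix p4 p4 ℝ))))
        (fromBlocks (W3ᵀ * (A * W3)) (fromCols 0 (fromCols (1 : Matrix p3 p3 ℝ) 0))
          (fromRows 0 (fromRows (1 : Matrix p3 p3 ℝ) 0)) (fromBlocks (Zᵀ * (A * Z)) 0 0 0)) ∧
    (auxV W3 W4 Z P Q)ᵀ * (fromBlocks 0 0 0 (fromBlocks M 0 0 0) :
        Matrix (m ⊕ (p3 ⊕ p4)) (m ⊕ (p3 ⊕ p4)) ℝ) * auxV W3 W4 Z P Q =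
      fromBlocks 0 0 0 (fromBlocks 0 0 0 (fromBlocks 0 0 0 (fromBlocks M 0 0 0))) ∧
    ∀ F3 : p3 → ℝ,
      (auxV W3 W4 Z P Q)ᵀ *ᵥ (Sum.elim (0 : m → ℝ) (Sum.elim F3 (0 : p4 → ℝ))) =
        Sum.elim (0 : p4 → ℝ) (Sum.elim (0 : p3 → ℝ)
          (Sum.elim (0 : r → ℝ) (Sum.elim F3 (0 : p4 → ℝ)))) := by
  -- transposed identities
  have t33 : W3ᵀ * B3ᵀ = 1 := by rw [← transpose_mul, h33, transpose_one]
  have t34 : W4ᵀ * B3ᵀ = 0 := by rw [← transpose_mul, h34, transpose_zero]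
  have t43 : W3ᵀ * B4ᵀ = 0 := by rw [← transpose_mul, h43, transpose_zero]
  have t44 : W4ᵀ * B4ᵀ = 1 := by rw [← transpose_mul, h44, transpose_one]
  have t3Z : Zᵀ * B3ᵀ = 0 := by rw [← transpose_mul, h3Z, transpose_zero]
  have t4Z : Zᵀ * B4ᵀ = 0 := by rw [← transpose_mul, h4Z, transpose_zero]
  have hW3AZ : W3ᵀ * (A * Z) = 0 := by
    have h2 := congrArg Matrix.transpose hZ3
    rwa [transpose_mul, transpose_mul, transpose_transpose, transpose_zero, hA,
      Matrix.mul_assoc] at h2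
  have hW4AZ : W4ᵀ * (A * Z) = 0 := by
    have h2 := congrArg Matrix.transpose hZ4
    rwa [transpose_mul, transpose_mul, transpose_transpose, transpose_zero, hA,
      Matrix.mul_assoc] at h2
  have hQ' : W3ᵀ * (A * W4) = -Qᵀ := by
    have h2 := congrArg Matrix.transpose hQ
    rwa [transpose_mul, transpose_mul, transpose_transpose, transpose_neg, hA,
      Matrix.mul_assoc] at h2
  -- generalized associated identities
  have g44P : W4ᵀ * (B4ᵀ * P) = P := by rw [← Matrix.mul_assoc, t44, Matrix.one_mul]
  have g44Q : W4ᵀ * (B4ᵀ * Q) = Q := by rw [← Matrix.mul_assoc, t44, Matrix.one_mul]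
  have g34P : W3ᵀ * (B4ᵀ * P) = 0 := by rw [← Matrix.mul_assoc, t43, Matrix.zero_mul]
  have g34Q : W3ᵀ * (B4ᵀ * Q) = 0 := by rw [← Matrix.mul_assoc, t43, Matrix.zero_mul]
  have gZP : Zᵀ * (B4ᵀ * P) = 0 := by rw [← Matrix.mul_assoc, t4Z, Matrix.zero_mul]
  have gZQ : Zᵀ * (B4ᵀ * Q) = 0 := by rw [← Matrix.mul_assoc, t4Z, Matrix.zero_mul]
  refine ⟨?_, ?_, ?_, ?_⟩
  · simp only [auxV, auxV', fromBlocks_expand, one_sum_expand, fc_fromRows, fc_zero_fromRows,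
      fc_fromRows_zero, transpose_fromRows, transpose_fromCols, transpose_zero, transpose_one,
      Matrix.mul_assoc, fromRows_mul, Matrix.mul_fromCols, fromCols_mul_fromRows,
      fromRows_zero, fromCols_zero, fromRows_add', fromCols_add',
      Matrix.fromRows_neg, Matrix.fromCols_neg, Matrix.mul_add,
      Matrix.add_mul, Matrix.neg_mul, Matrix.mul_neg, Matrix.zero_mul, Matrix.mul_zero,
      Matrix.mul_one, Matrix.one_mul, add_zero, zero_add, neg_zero, neg_add_cancel,
      neg_add_cancel_right, neg_neg,
      h33, h34, h43, h44, h3Z, h4Z, hZ3, hZ4, hL3, hL4, hLZ, hPt, hP, hQ, hQ',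
      hW3AZ, hW4AZ, t33, t34, t43, t44, t3Z, t4Z, g44P, g44Q, g34P, g34Q, gZP, gZQ,
      fromRows_ext_iff, fromCols_ext_iff]
  · simp only [auxV, auxV', fromBlocks_expand, one_sum_expand, fc_fromRows, fc_zero_fromRows,
      fc_fromRows_zero, transpose_fromRows, transpose_fromCols, transpose_zero, transpose_one,
      Matrix.mul_assoc, fromRows_mul, Matrix.mul_fromCols, fromCols_mul_fromRows,
      fromRows_zero, fromCols_zero, fromRows_add', fromCols_add',
      Matrix.fromRows_neg, Matrix.fromCols_neg, Matrix.mul_add,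
      Matrix.add_mul, Matrix.neg_mul, Matrix.mul_neg, Matrix.zero_mul, Matrix.mul_zero,
      Matrix.mul_one, Matrix.one_mul, add_zero, zero_add, neg_zero, neg_add_cancel,
      neg_add_cancel_right, neg_neg,
      h33, h34, h43, h44, h3Z, h4Z, hZ3, hZ4, hL3, hL4, hLZ, hPt, hP, hQ, hQ',
      hW3AZ, hW4AZ, t33, t34, t43, t44, t3Z, t4Z, g44P, g44Q, g34P, g34Q, gZP, gZQ,
      fromRows_ext_iff, fromCols_ext_iff]
  · simp only [auxV, auxV', fromBlocks_expand, one_sum_expand, fc_fromRows, fc_zero_fromRows,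
      fc_fromRows_zero, transpose_fromRows, transpose_fromCols, transpose_zero, transpose_one,
      Matrix.mul_assoc, fromRows_mul, Matrix.mul_fromCols, fromCols_mul_fromRows,
      fromRows_zero, fromCols_zero, fromRows_add', fromCols_add',
      Matrix.fromRows_neg, Matrix.fromCols_neg, Matrix.mul_add,
      Matrix.add_mul, Matrix.neg_mul, Matrix.mul_neg, Matrix.zero_mul, Matrix.mul_zero,
      Matrix.mul_one, Matrix.one_mul, add_zero, zero_add, neg_zero,
      fromRows_ext_iff, fromCols_ext_iff]
  · intro F3
    simp only [auxV, fromBlocks_expand, one_sum_expand, fc_fromRows, fc_zero_fromRows,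
      fc_fromRows_zero, transpose_fromRows, transpose_fromCols, transpose_zero, transpose_one,
      fromRows_mulVec, fromCols_mulVec_sumElim, Matrix.mulVec_zero, Matrix.zero_mulVec,
      Matrix.one_mulVec, add_zero, zero_add, fromRows_zero, fromCols_zero]

end Aux

end DAECanon

/-- Canonical form of the structured matrix pair (E, K). -/
theorem dae_canonical_form (n1 n2 n3 n4 : ℕ)
    (M : Matrix (Fin n3) (Fin n3) ℝ) (A11 : Matrix (Fin n1) (Fin n1) ℝ)
    (B32 : Matrix (Fin n3) (Fin n2) ℝ) (B41 : Matrix (Fin n4) (Fin n1) ℝ)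
    (B42 : Matrix (Fin n4) (Fin n2) ℝ)
    (hM : M.PosDef) (hA11 : A11.PosSemidef)
    (hK : IsUnit (Matrix.fromBlocks
      (Matrix.fromBlocks A11 0 0 0) (Matrix.fromBlocks 0 B41ᵀ B32ᵀ B42ᵀ)
      (Matrix.fromBlocks 0 B32 B41 B42) 0))
    (hKerB : ∀ x : Fin n1 ⊕ Fin n2 → ℝ,
      (Matrix.fromBlocks 0 B32 B41 B42).mulVec x = 0 → x ≠ 0 →
      0 < x ⬝ᵥ (Matrix.fromBlocks A11 0 0 0).mulVec x) :
    ∃ (V : Matrix ((Fin n1 ⊕ Fin n2) ⊕ (Fin n3 ⊕ Fin n4))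
          (Fin n4 ⊕ (Fin n3 ⊕ (Fin (n1 + n2 - n3 - n4) ⊕ (Fin n3 ⊕ Fin n4)))) ℝ)
      (V' : Matrix (Fin n4 ⊕ (Fin n3 ⊕ (Fin (n1 + n2 - n3 - n4) ⊕ (Fin n3 ⊕ Fin n4))))
          ((Fin n1 ⊕ Fin n2) ⊕ (Fin n3 ⊕ Fin n4)) ℝ),
      V * V' = 1 ∧ V' * V = 1 ∧
      ∃ (A22 : Matrix (Fin n3) (Fin n3) ℝ)
        (A33 : Matrix (Fin (n1 + n2 - n3 - n4)) (Fin (n1 + n2 - n3 - n4)) ℝ)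
        (B42h : Matrix (Fin n3) (Fin n3) ℝ) (B51h : Matrix (Fin n4) (Fin n4) ℝ),
        A33.IsSymm ∧ IsUnit B42h ∧ IsUnit B51h ∧
        -- (i) the transformed E
        Vᵀ * (Matrix.fromBlocks 0 0 0 (Matrix.fromBlocks M 0 0 0) :
            Matrix ((Fin n1 ⊕ Fin n2) ⊕ (Fin n3 ⊕ Fin n4)) ((Fin n1 ⊕ Fin n2) ⊕ (Fin n3 ⊕ Fin n4)) ℝ) * V =
          Matrix.fromBlocks 0 0 0 (Matrix.fromBlocks 0 0 0
            (Matrix.fromBlocks 0 0 0 (Matrix.fromBlocks M 0 0 0))) ∧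
        -- (ii) the transformed K
        Vᵀ * (Matrix.fromBlocks
            (Matrix.fromBlocks A11 0 0 0) (Matrix.fromBlocks 0 B41ᵀ B32ᵀ B42ᵀ)
            (Matrix.fromBlocks 0 B32 B41 B42) 0) * V =
          Matrix.fromBlocks 0
            (Matrix.fromCols 0 (Matrix.fromCols 0 (Matrix.fromCols 0 B51hᵀ)))
            (Matrix.fromRows 0 (Matrix.fromRows 0 (Matrix.fromRows 0 B51h)))
            (Matrix.fromBlocks A22
              (Matrix.fromCols 0 (Matrix.fromCols B42hᵀ 0))
              (Matrix.fromRows 0 (Matrix.fromRows B42h 0))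
              (Matrix.fromBlocks A33 0 0 0)) ∧
        -- (iii) the transformed right-hand side
        ∀ F3 : Fin n3 → ℝ,
          Vᵀ.mulVec (Sum.elim (Sum.elim (0 : Fin n1 → ℝ) (0 : Fin n2 → ℝ))
              (Sum.elim F3 (0 : Fin n4 → ℝ))) =
            Sum.elim (0 : Fin n4 → ℝ) (Sum.elim (0 : Fin n3 → ℝ)
              (Sum.elim (0 : Fin (n1 + n2 - n3 - n4) → ℝ)
                (Sum.elim F3 (0 : Fin n4 → ℝ)))) := by
  classical

  classical
  set Am : Matrix (Fin n1 ⊕ Fin n2) (Fin n1 ⊕ Fin n2) ℝ := fromBlocks A11 0 0 0 with hAm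
  set Bm : Matrix (Fin n3 ⊕ Fin n4) (Fin n1 ⊕ Fin n2) ℝ := fromBlocks 0 B32 B41 B42 with hBm
  -- symmetry of Am
  have h11 : A11ᵀ = A11 := by
    ext i j
    have := congrFun (congrFun hA11.1 i) j
    simpa using this
  have hAt : Amᵀ = Am := by
    rw [hAm, fromBlocks_transpose, h11]
    simp
  -- K as blocks of Am, Bm
  have hBt : Bmᵀ = fromBlocks 0 B41ᵀ B32ᵀ B42ᵀ := by
    rw [hBm, fromBlocks_transpose, transpose_zero]
  have hKu : IsUnit (fromBlocks Am Bmᵀ Bm 0) := by rwa [hBt]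
  have hKinj : Function.Injective (fromBlocks Am Bmᵀ Bm (0 : Matrix (Fin n3 ⊕ Fin n4) (Fin n3 ⊕ Fin n4) ℝ)).mulVec :=
    mulVec_injective_iff_isUnit.mpr hKu
  -- B transpose has trivial kernel
  have hBtker : ∀ y : (Fin n3 ⊕ Fin n4) → ℝ, Bmᵀ *ᵥ y = 0 → y = 0 := by
    intro y hy
    have h0 : (fromBlocks Am Bmᵀ Bm (0 : Matrix (Fin n3 ⊕ Fin n4) (Fin n3 ⊕ Fin n4) ℝ)) *ᵥ (Sum.elim 0 y) =
        (fromBlocks Am Bmᵀ Bm (0 : Matrix (Fin n3 ⊕ Fin n4) (Fin n3 ⊕ Fin n4) ℝ)) *ᵥ 0 := by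
      rw [Matrix.mulVec_zero, fromBlocks_mulVec]
      simp [hy]
    have h1 := hKinj h0
    funext i
    exact congrFun h1 (Sum.inr i)
  -- surjectivity of Bm.mulVec
  have hBtinj : Function.Injective (Bmᵀ.mulVecLin) := by
    rw [← LinearMap.ker_eq_bot, LinearMap.ker_eq_bot']
    intro y hy
    exact hBtker y hy
  have hrankT : Bmᵀ.rank = Fintype.card (Fin n3 ⊕ Fin n4) := by
    rw [Matrix.rank]
    rw [LinearMap.finrank_range_of_inj hBtinj]
    simp [Module.finrank_fintype_fun_eq_card]
  have hrank : Bm.rank = Fintype.card (Fin n3 ⊕ Fin n4) := by rw [← Matrix.rank_transpose, hrankT]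
  have hrangetop : LinearMap.range Bm.mulVecLin = ⊤ := by
    apply Submodule.eq_top_of_finrank_eq
    have : Module.finrank ℝ (LinearMap.range Bm.mulVecLin) = Bm.rank := rfl
    rw [this, hrank]
    simp [Module.finrank_fintype_fun_eq_card]
  have hBsurj : Function.Surjective Bm.mulVec := by
    intro y
    obtain ⟨x, hx⟩ := LinearMap.range_eq_top.mp hrangetop y
    exact ⟨x, hx⟩
  have hle : n3 + n4 ≤ n1 + n2 := by
    have h1 : Module.finrank ℝ (LinearMap.range Bm.mulVecLin) ≤
        Module.finrank ℝ ((Fin n1 ⊕ Fin n2) → ℝ) := by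
      have := LinearMap.finrank_range_add_finrank_ker Bm.mulVecLin
      omega
    rw [hrangetop] at h1
    simpa [Module.finrank_fintype_fun_eq_card] using h1
  -- kernel of B
  have hker : Module.finrank ℝ (LinearMap.ker Bm.mulVecLin) = n1 + n2 - n3 - n4 := by
    have h1 := LinearMap.finrank_range_add_finrank_ker Bm.mulVecLin
    rw [hrangetop] at h1
    simp only [Module.finrank_fintype_fun_eq_card, finrank_top,
      Fintype.card_sum, Fintype.card_fin] at h1
    omega
  set bZ : Module.Basis (Fin (n1 + n2 - n3 - n4)) ℝ (LinearMap.ker Bm.mulVecLin) :=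
    Module.finBasisOfFinrankEq ℝ _ hker with hbZ
  set Z : Matrix (Fin n1 ⊕ Fin n2) (Fin (n1 + n2 - n3 - n4)) ℝ :=
    Matrix.of (fun i c => ((bZ c : (Fin n1 ⊕ Fin n2) → ℝ)) i) with hZ
  have hZcols : ∀ c, (fun i => Z i c) = ((bZ c : (Fin n1 ⊕ Fin n2) → ℝ)) := by
    intro c; funext i; rfl
  have hZv : ∀ c : Fin (n1 + n2 - n3 - n4) → ℝ,
      Z *ᵥ c = ((∑ j, c j • bZ j : LinearMap.ker Bm.mulVecLin) : (Fin n1 ⊕ Fin n2) → ℝ) := by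
    intro c
    funext i
    simp [Matrix.mulVec, dotProduct, hZ, mul_comm]
  have hBZcol : ∀ c, Bm *ᵥ ((bZ c : (Fin n1 ⊕ Fin n2) → ℝ)) = 0 := by
    intro c
    exact LinearMap.mem_ker.mp (bZ c).2
  have hBZ : Bm * Z = 0 := by
    ext e c
    have h1 : (Bm * Z) e c = (Bm *ᵥ (fun i => Z i c)) e := by
      simp [Matrix.mul_apply, Matrix.mulVec, dotProduct]
    rw [h1, hZcols c, hBZcol c]
    rfl
  have hBZv : ∀ c, Bm *ᵥ (Z *ᵥ c) = 0 := by
    intro c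
    rw [Matrix.mulVec_mulVec, hBZ, Matrix.zero_mulVec]
  have hZinj : ∀ c, Z *ᵥ c = 0 → c = 0 := by
    intro c h
    rw [hZv] at h
    have h2 : (∑ j, c j • bZ j : LinearMap.ker Bm.mulVecLin) = 0 := by
      exact_mod_cast Subtype.coe_injective (by simpa using h)
    have h3 := Fintype.linearIndependent_iff.mp bZ.linearIndependent c h2
    funext i
    exact h3 i
  -- dot product helper
  have hdot : ∀ {k : Type} [Fintype k] (X : Matrix (Fin n1 ⊕ Fin n2) k ℝ) (c : k → ℝ) (u : (Fin n1 ⊕ Fin n2) → ℝ),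
      c ⬝ᵥ (Xᵀ *ᵥ u) = (X *ᵥ c) ⬝ᵥ u := by
    intro k _ X c u
    rw [dotProduct_mulVec, Matrix.vecMul_transpose]
  -- Zᵀ * Z is invertible
  have hNinj : Function.Injective (Zᵀ * Z).mulVec := by
    have key : ∀ c, (Zᵀ * Z) *ᵥ c = 0 → c = 0 := by
      intro c h
      have h2 : (Z *ᵥ c) ⬝ᵥ (Z *ᵥ c) = 0 := by
        rw [← hdot Z c (Z *ᵥ c), Matrix.mulVec_mulVec, h, dotProduct_zero]
      exact hZinj c (dotProduct_self_eq_zero.mp h2)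
    intro x y h
    have h2 : (Zᵀ * Z) *ᵥ (x - y) = 0 := by
      rw [Matrix.mulVec_sub, h, sub_self]
    exact sub_eq_zero.mp (key _ h2)
  have hNu : IsUnit (Zᵀ * Z) := mulVec_injective_iff_isUnit.mp hNinj
  have hNinvN : (Zᵀ * Z)⁻¹ * (Zᵀ * Z) = 1 :=
    Matrix.nonsing_inv_mul _ ((Matrix.isUnit_iff_isUnit_det _).mp hNu)
  -- G = Zᵀ * Am * Z is invertible
  set G : Matrix (Fin (n1 + n2 - n3 - n4)) (Fin (n1 + n2 - n3 - n4)) ℝ :=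
    Zᵀ * Am * Z with hG
  have hGinj : Function.Injective G.mulVec := by
    have key : ∀ c, G *ᵥ c = 0 → c = 0 := by
      intro c h
      by_contra hc
      have hZc : Z *ᵥ c ≠ 0 := fun h0 => hc (hZinj c h0)
      have hpos := hKerB (Z *ᵥ c) (hBZv c) hZc
      have h2 : c ⬝ᵥ (G *ᵥ c) = (Z *ᵥ c) ⬝ᵥ (Am *ᵥ (Z *ᵥ c)) := by
        rw [hG, ← Matrix.mulVec_mulVec, ← Matrix.mulVec_mulVec, hdot]
      rw [← h2, h, dotProduct_zero] at hpos
      exact lt_irrefl 0 hpos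
    intro x y h
    have h2 : G *ᵥ (x - y) = 0 := by rw [Matrix.mulVec_sub, h, sub_self]
    exact sub_eq_zero.mp (key _ h2)
  have hGu : IsUnit G := mulVec_injective_iff_isUnit.mp hGinj
  have hGiG : G * G⁻¹ = 1 :=
    Matrix.mul_nonsing_inv _ ((Matrix.isUnit_iff_isUnit_det _).mp hGu)
  -- right inverse W of Bm
  obtain ⟨W, hW⟩ := Matrix.mulVec_surjective_iff_exists_right_inverse.mp hBsurj
  -- corrected right inverse
  set Wt : Matrix (Fin n1 ⊕ Fin n2) (Fin n3 ⊕ Fin n4) ℝ := W - Z * (G⁻¹ * (Zᵀ * (Am * W))) with hWt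
  have hBWt : Bm * Wt = 1 := by
    rw [hWt, Matrix.mul_sub, hW, ← Matrix.mul_assoc, hBZ, Matrix.zero_mul, sub_zero]
  have hZAWt : Zᵀ * (Am * Wt) = 0 := by
    have e1 : Zᵀ * (Am * (Z * (G⁻¹ * (Zᵀ * (Am * W))))) = Zᵀ * (Am * W) := by
      rw [← Matrix.mul_assoc Am Z, ← Matrix.mul_assoc Zᵀ, ← Matrix.mul_assoc Zᵀ Am Z, ← hG,
        ← Matrix.mul_assoc G, hGiG, Matrix.one_mul]
    rw [hWt, Matrix.mul_sub, Matrix.mul_sub, e1, sub_self]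
  -- split into blocks
  set B3 : Matrix (Fin n3) (Fin n1 ⊕ Fin n2) ℝ := fromCols 0 B32 with hB3
  set B4 : Matrix (Fin n4) (Fin n1 ⊕ Fin n2) ℝ := fromCols B41 B42 with hB4
  have hBrows : Bm = fromRows B3 B4 := by
    rw [hBm, hB3, hB4, fromRows_fromCols_eq_fromBlocks]
  set W3 : Matrix (Fin n1 ⊕ Fin n2) (Fin n3) ℝ := Wt.toCols₁ with hW3
  set W4 : Matrix (Fin n1 ⊕ Fin n2) (Fin n4) ℝ := Wt.toCols₂ with hW4
  have hWcols : Wt = fromCols W3 W4 := (fromCols_toCols Wt).symm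
  have hsplit : fromBlocks (B3 * W3) (B3 * W4) (B4 * W3) (B4 * W4)
      = fromBlocks 1 0 0 1 := by
    have h0 := hBWt
    rw [hBrows, hWcols, fromRows_mul_fromCols, ← fromBlocks_one] at h0
    exact h0
  obtain ⟨h33, h34, h43, h44⟩ := Matrix.fromBlocks_inj.mp hsplit
  have hBZsplit : fromRows (B3 * Z) (B4 * Z) = fromRows (0 : Matrix (Fin n3) _ ℝ)
      (0 : Matrix (Fin n4) _ ℝ) := by
    rw [← fromRows_mul, ← hBrows, hBZ, fromRows_zero]
  have h3Z : B3 * Z = 0 := ((fromRows_ext_iff _ _ _ _).mp hBZsplit).1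
  have h4Z : B4 * Z = 0 := ((fromRows_ext_iff _ _ _ _).mp hBZsplit).2
  have hZAsplit : fromCols (Zᵀ * (Am * W3)) (Zᵀ * (Am * W4)) =
      fromCols (0 : Matrix _ (Fin n3) ℝ) (0 : Matrix _ (Fin n4) ℝ) := by
    rw [← Matrix.mul_fromCols, ← Matrix.mul_fromCols, ← hWcols, hZAWt,
      fromCols_zero]
  have hZ3 : Zᵀ * (Am * W3) = 0 := ((fromCols_ext_iff _ _ _ _).mp hZAsplit).1
  have hZ4 : Zᵀ * (Am * W4) = 0 := ((fromCols_ext_iff _ _ _ _).mp hZAsplit).2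
  -- the matrix L
  set L : Matrix (Fin (n1 + n2 - n3 - n4)) (Fin n1 ⊕ Fin n2) ℝ :=
    (Zᵀ * Z)⁻¹ * (Zᵀ * (1 - Wt * Bm)) with hL
  have hLmul : ∀ (k : Type) [Fintype k] (X : Matrix (Fin n1 ⊕ Fin n2) k ℝ),
      L * X = (Zᵀ * Z)⁻¹ * (Zᵀ * (X - Wt * (Bm * X))) := by
    intro k _ X
    rw [hL, Matrix.mul_assoc, Matrix.mul_assoc, Matrix.sub_mul, Matrix.one_mul,
      Matrix.mul_assoc]
  have hL3 : L * W3 = 0 := by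
    rw [hLmul]
    have : Bm * W3 = fromRows 1 0 := by
      rw [hBrows, fromRows_mul, h33, h43]
    rw [this, hWcols, fromCols_mul_fromRows, Matrix.mul_one, Matrix.mul_zero, add_zero,
      sub_self, Matrix.mul_zero, Matrix.mul_zero]
  have hL4 : L * W4 = 0 := by
    rw [hLmul]
    have : Bm * W4 = fromRows 0 1 := by
      rw [hBrows, fromRows_mul, h34, h44]
    rw [this, hWcols, fromCols_mul_fromRows, Matrix.mul_one, Matrix.mul_zero, zero_add,
      sub_self, Matrix.mul_zero, Matrix.mul_zero]
  have hLZ : L * Z = 1 := by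
    rw [hLmul, hBZ, Matrix.mul_zero, sub_zero, hNinvN]
  -- P and Q
  set P : Matrix (Fin n4) (Fin n4) ℝ := (-(2⁻¹ : ℝ)) • (W4ᵀ * (Am * W4)) with hP
  set Q : Matrix (Fin n4) (Fin n3) ℝ := -(W4ᵀ * (Am * W3)) with hQ
  have hXsym : (W4ᵀ * (Am * W4))ᵀ = W4ᵀ * (Am * W4) := by
    rw [transpose_mul, transpose_mul, transpose_transpose, hAt, Matrix.mul_assoc]
  have hPt : Pᵀ = P := by
    rw [hP, transpose_smul, hXsym]
  have hPP : W4ᵀ * (Am * W4) = -P + -P := by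
    rw [hP, neg_smul, neg_neg, ← add_smul]
    norm_num
  have hQQ : W4ᵀ * (Am * W3) = -Q := by rw [hQ, neg_neg]
  -- symmetry of A33
  have hA33symm : (Zᵀ * (Am * Z)).IsSymm := by
    show (Zᵀ * (Am * Z))ᵀ = _
    rw [transpose_mul, transpose_mul, transpose_transpose, hAt, Matrix.mul_assoc]
  -- invoke the block computation
  obtain ⟨hinv, hKres, hEres, hFres⟩ :=
    DAECanon.aux Am B3 B4 W3 W4 Z L P Q M hAt h33 h34 h43 h44 h3Z h4Z hZ3 hZ4
      hL3 hL4 hLZ hPt hPP hQQ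
  have hcard : Fintype.card ((Fin n1 ⊕ Fin n2) ⊕ (Fin n3 ⊕ Fin n4)) =
      Fintype.card (Fin n4 ⊕ (Fin n3 ⊕ (Fin (n1 + n2 - n3 - n4) ⊕ (Fin n3 ⊕ Fin n4)))) := by
    simp only [Fintype.card_sum, Fintype.card_fin]
    omega
  have hVV' : DAECanon.auxV W3 W4 Z P Q * DAECanon.auxV' B3 B4 L P Q = 1 :=
    (Matrix.mul_eq_one_comm_of_equiv (Fintype.equivOfCardEq hcard)).mpr hinv
  refine ⟨DAECanon.auxV W3 W4 Z P Q, DAECanon.auxV' B3 B4 L P Q, hVV', hinv,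
    W3ᵀ * (Am * W3), Zᵀ * (Am * Z), 1, 1, hA33symm, isUnit_one, isUnit_one, ?_, ?_, ?_⟩
  · exact hEres
  · rw [← hBt, hBrows, Matrix.transpose_fromRows]
    simp only [Matrix.transpose_one]
    exact hKres
  · intro F3
    have h0 : Sum.elim (0 : Fin n1 → ℝ) (0 : Fin n2 → ℝ) = (0 : (Fin n1 ⊕ Fin n2) → ℝ) := by
      funext x; cases x <;> rfl
    rw [h0]
    exact hFres F3

end
end

section
/- Solution structure of the transformed differential-algebraic equation: let Ê = diag(0, 0, 0, M, 0) and K̂ = [[0, 0, 0, 0, B̂₅₁ᵀ], [0, Â₂₂, 0, B̂₄₂ᵀ, 0], [0, 0, Â₃₃, 0, 0], [0, B̂₄₂, 0, 0, 0], [B̂₅₁, 0, 0, 0, 0]] be real block matrices with M symmetric positive definite and Â₃₃, B̂₄₂, B̂₅₁ invertible (B̂₄₂ and B̂₅₁ square). Let F̂₄ : ℝ → ℝ^{n₃} be continuous and suppose z = (z₁, z₂, z₃, z₄, z₅) : ℝ → ℝⁿ is a function whose block components z₂ and z₄ are twice differentiable and which satisfies −Ê z̈(t) + K̂ z(t) =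 (0, 0, 0, F̂₄(t), 0) for all t. Then for all t: z₁(t) = 0, z₃(t) = 0, z₅(t) = 0, z₄(t) = −(B̂₄₂ᵀ)⁻¹ Â₂₂ z₂(t), and z₂ satisfies the second-order equation Â₂₂ z̈₂(t) + B̂₄₂ᵀ M⁻¹ B̂₄₂ z₂(t) = B̂₄₂ᵀ M⁻¹ F̂₄(t). -/
open Matrix

noncomputable section

lemma dae_hasDerivAt_mulVec {n k : ℕ} (A : Matrix (Fin n) (Fin k) ℝ)
    {f : ℝ → Fin k → ℝ} {f' : Fin k → ℝ} {τ : ℝ} (h : HasDerivAt f f' τ) :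
    HasDerivAt (fun t => A.mulVec (f t)) (A.mulVec f') τ := by
  have hL := (LinearMap.toContinuousLinearMap A.mulVecLin).hasFDerivAt (x := f τ)
  exact hL.comp_hasDerivAt τ h

lemma dae_mulVec_eq_zero {k : ℕ} (A : Matrix (Fin k) (Fin k) ℝ) (hA : IsUnit A.det)
    {v : Fin k → ℝ} (h : A.mulVec v = 0) : v = 0 := by
  have h2 := congrArg A⁻¹.mulVec h
  simpa [Matrix.mulVec_mulVec, Matrix.nonsing_inv_mul A hA] using h2

/-- Solution structure of the transformed differential-algebraic
equation.  The blocks have sizes n₄, n₃, m, n₃, n₄. -/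
theorem dae_solution_structure (n4 n3 m : ℕ)
    (M : Matrix (Fin n3) (Fin n3) ℝ) (A22 : Matrix (Fin n3) (Fin n3) ℝ)
    (A33 : Matrix (Fin m) (Fin m) ℝ) (B42h : Matrix (Fin n3) (Fin n3) ℝ)
    (B51h : Matrix (Fin n4) (Fin n4) ℝ)
    (hM : M.PosDef) (hA22 : A22.IsSymm) (hA33symm : A33.IsSymm) (hA33 : IsUnit A33)
    (hB42 : IsUnit B42h) (hB51 : IsUnit B51h)
    (F4 : ℝ → Fin n3 → ℝ) (hF4 : Continuous F4)
    (z1 : ℝ → Fin n4 → ℝ) (z2 : ℝ → Fin n3 → ℝ) (z3 : ℝ → Fin m → ℝ)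
    (z4 : ℝ → Fin n3 → ℝ) (z5 : ℝ → Fin n4 → ℝ)
    (dz2 ddz2 : ℝ → Fin n3 → ℝ) (dz4 ddz4 : ℝ → Fin n3 → ℝ)
    (hz2 : ∀ τ, HasDerivAt z2 (dz2 τ) τ) (hz2' : ∀ τ, HasDerivAt dz2 (ddz2 τ) τ)
    (hz4 : ∀ τ, HasDerivAt z4 (dz4 τ) τ) (hz4' : ∀ τ, HasDerivAt dz4 (ddz4 τ) τ)
    (hdae : ∀ τ : ℝ,
      -(Matrix.fromBlocks 0 0 0 (Matrix.fromBlocks 0 0 0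
          (Matrix.fromBlocks 0 0 0 (Matrix.fromBlocks M 0 0 0)))).mulVec
        (Sum.elim (0 : Fin n4 → ℝ) (Sum.elim (ddz2 τ)
          (Sum.elim (0 : Fin m → ℝ) (Sum.elim (ddz4 τ) (0 : Fin n4 → ℝ)))))
      + (Matrix.fromBlocks 0
            (Matrix.fromCols 0 (Matrix.fromCols 0 (Matrix.fromCols 0 B51hᵀ)))
            (Matrix.fromRows 0 (Matrix.fromRows 0 (Matrix.fromRows 0 B51h)))
            (Matrix.fromBlocks A22
              (Matrix.fromCols 0 (Matrix.fromCols B42hᵀ 0))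
              (Matrix.fromRows 0 (Matrix.fromRows B42h 0))
              (Matrix.fromBlocks A33 0 0 0))).mulVec
        (Sum.elim (z1 τ) (Sum.elim (z2 τ) (Sum.elim (z3 τ) (Sum.elim (z4 τ) (z5 τ)))))
      = Sum.elim (0 : Fin n4 → ℝ) (Sum.elim (0 : Fin n3 → ℝ)
          (Sum.elim (0 : Fin m → ℝ) (Sum.elim (F4 τ) (0 : Fin n4 → ℝ))))) :
    ∀ τ : ℝ,
      z1 τ = 0 ∧ z3 τ = 0 ∧ z5 τ = 0 ∧
      z4 τ = -(B42hᵀ)⁻¹.mulVec (A22.mulVec (z2 τ)) ∧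
      A22.mulVec (ddz2 τ) + (B42hᵀ * M⁻¹ * B42h).mulVec (z2 τ)
        = (B42hᵀ * M⁻¹).mulVec (F4 τ) := by
  -- determinant units
  have hB51det : IsUnit B51h.det := (Matrix.isUnit_iff_isUnit_det _).mp hB51
  have hB42det : IsUnit B42h.det := (Matrix.isUnit_iff_isUnit_det _).mp hB42
  have hB51Tdet : IsUnit B51hᵀ.det := by rwa [Matrix.det_transpose]
  have hB42Tdet : IsUnit B42hᵀ.det := by rwa [Matrix.det_transpose]
  have hA33det : IsUnit A33.det := (Matrix.isUnit_iff_isUnit_det _).mp hA33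
  have hMdet : IsUnit M.det := isUnit_iff_ne_zero.mpr (ne_of_gt hM.det_pos)
  -- extract block rows
  have h1 : ∀ σ : ℝ, B51hᵀ.mulVec (z5 σ) = 0 := by
    intro σ; funext i
    have := congrFun (hdae σ) (Sum.inl i)
    simpa [Matrix.fromBlocks_mulVec, Matrix.fromCols_mulVec_sumElim,
      Matrix.fromRows_mulVec, Matrix.zero_mulVec, Matrix.mulVec_zero] using this
  have h2 : ∀ σ : ℝ, A22.mulVec (z2 σ) + B42hᵀ.mulVec (z4 σ) = 0 := by
    intro σ; funext i
    have := congrFun (hdae σ) (Sum.inr (Sum.inl i))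
    simpa [Matrix.fromBlocks_mulVec, Matrix.fromCols_mulVec_sumElim,
      Matrix.fromRows_mulVec, Matrix.zero_mulVec, Matrix.mulVec_zero] using this
  have h3 : ∀ σ : ℝ, A33.mulVec (z3 σ) = 0 := by
    intro σ; funext i
    have := congrFun (hdae σ) (Sum.inr (Sum.inr (Sum.inl i)))
    simpa [Matrix.fromBlocks_mulVec, Matrix.fromCols_mulVec_sumElim,
      Matrix.fromRows_mulVec, Matrix.zero_mulVec, Matrix.mulVec_zero] using this
  have h4 : ∀ σ : ℝ, -(M.mulVec (ddz4 σ)) + B42h.mulVec (z2 σ) = F4 σ := by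
    intro σ; funext i
    have := congrFun (hdae σ) (Sum.inr (Sum.inr (Sum.inr (Sum.inl i))))
    simpa [Matrix.fromBlocks_mulVec, Matrix.fromCols_mulVec_sumElim,
      Matrix.fromRows_mulVec, Matrix.zero_mulVec, Matrix.mulVec_zero] using this
  have h5 : ∀ σ : ℝ, B51h.mulVec (z1 σ) = 0 := by
    intro σ; funext i
    have := congrFun (hdae σ) (Sum.inr (Sum.inr (Sum.inr (Sum.inr i))))
    simpa [Matrix.fromBlocks_mulVec, Matrix.fromCols_mulVec_sumElim,
      Matrix.fromRows_mulVec, Matrix.zero_mulVec, Matrix.mulVec_zero] using this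
  -- the algebraic constraint z4 = -(B42ᵀ)⁻¹ A22 z2 for all times
  have hz4eq : ∀ σ : ℝ, z4 σ = -(B42hᵀ)⁻¹.mulVec (A22.mulVec (z2 σ)) := by
    intro σ
    have hb : B42hᵀ.mulVec (z4 σ) = -(A22.mulVec (z2 σ)) :=
      eq_neg_of_add_eq_zero_right (h2 σ)
    have h2' := congrArg (B42hᵀ)⁻¹.mulVec hb
    rw [Matrix.mulVec_mulVec, Matrix.nonsing_inv_mul _ hB42Tdet, Matrix.one_mulVec,
      Matrix.mulVec_neg] at h2'
    exact h2'
  -- z4 is a constant linear image of z2, hence so are its derivatives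
  set C : Matrix (Fin n3) (Fin n3) ℝ := -((B42hᵀ)⁻¹ * A22) with hCdef
  have hz4fun : z4 = fun t => C.mulVec (z2 t) := by
    funext σ
    rw [hz4eq σ, hCdef, Matrix.neg_mulVec, Matrix.mulVec_mulVec]
  have hdz4 : ∀ σ : ℝ, dz4 σ = C.mulVec (dz2 σ) := by
    intro σ
    have h := hz4 σ
    rw [hz4fun] at h
    exact h.unique (dae_hasDerivAt_mulVec C (hz2 σ))
  have hdz4fun : dz4 = fun t => C.mulVec (dz2 t) := funext hdz4
  have hddz4 : ∀ σ : ℝ, ddz4 σ = C.mulVec (ddz2 σ) := by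
    intro σ
    have h := hz4' σ
    rw [hdz4fun] at h
    exact h.unique (dae_hasDerivAt_mulVec C (hz2' σ))
  -- key matrix identity
  have e1 : (B42hᵀ * M⁻¹) * (M * ((B42hᵀ)⁻¹ * A22)) = A22 := by
    calc (B42hᵀ * M⁻¹) * (M * ((B42hᵀ)⁻¹ * A22))
        = B42hᵀ * ((M⁻¹ * M) * ((B42hᵀ)⁻¹ * A22)) := by
          simp only [Matrix.mul_assoc]
      _ = (B42hᵀ * (B42hᵀ)⁻¹) * A22 := by
          rw [Matrix.nonsing_inv_mul _ hMdet, Matrix.one_mul, ← Matrix.mul_assoc]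
      _ = A22 := by rw [Matrix.mul_nonsing_inv _ hB42Tdet, Matrix.one_mul]
  intro τ
  refine ⟨dae_mulVec_eq_zero B51h hB51det (h5 τ), dae_mulVec_eq_zero A33 hA33det (h3 τ),
    dae_mulVec_eq_zero B51hᵀ hB51Tdet (h1 τ), hz4eq τ, ?_⟩
  -- final second-order equation
  have e2 : B42hᵀ * M⁻¹ * M * ((B42hᵀ)⁻¹ * A22) = A22 := by
    rw [Matrix.mul_assoc B42hᵀ M⁻¹ M, Matrix.nonsing_inv_mul M hMdet, Matrix.mul_one,
      ← Matrix.mul_assoc, Matrix.mul_nonsing_inv _ hB42Tdet, Matrix.one_mul]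
  have key := congrArg (B42hᵀ * M⁻¹).mulVec (h4 τ)
  rw [Matrix.mulVec_add, Matrix.mulVec_neg, hddz4 τ, hCdef, Matrix.neg_mulVec,
    Matrix.mulVec_neg, Matrix.mulVec_neg, neg_neg] at key
  simp only [Matrix.mulVec_mulVec] at key
  rw [← key]
  congr 1
  rw [e1]

end
end
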